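/- Let $H \in (0, 1/2)$ and $\varepsilon \in (0, 1)$. Let $L \geq 1$ be an integer with $2^{L(2H+1)} \leq 2^{2H+1}\varepsilon^{-2}$, set $\Delta_l = 2^{-l}$, and for $l \in \{0, \dots, L\}$ set $M_l = \lceil \varepsilon^{-2}\,\Delta_l^{(2H+3)/2}\,\Delta_L^{H-1/2} \rceil$. Then there is a constant $C < \infty$ depending only on $H$ such that the total computational cost satisfies $\sum_{l=0}^{L} \Delta_l^{-2} M_l \leq C\,\varepsilon^{-\frac{4}{2H+1}}$. -/

import Mathlib

/-- The cost calculation for the multilevel MCMC method: with `Δ_l = 2^{-l}`,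
`2^{L(2H+1)} ≤ 2^{2H+1} ε^{-2}` and `M_l = ⌈ε^{-2} Δ_l^{(2H+3)/2} Δ_L^{H-1/2}⌉`,
there is a constant `C` depending only on `H` such that the total cost
satisfies `∑_{l=0}^L Δ_l^{-2} M_l ≤ C ε^{-4/(2H+1)}`. -/
theorem multilevel_cost_bound
    (H : ℝ) (hH0 : 0 < H) (hH1 : H < 1 / 2) :
    ∃ C : ℝ, ∀ (ε : ℝ), 0 < ε → ε < 1 →
      ∀ (L : ℕ), 1 ≤ L →
        (2 : ℝ) ^ ((L : ℝ) * (2 * H + 1)) ≤ (2 : ℝ) ^ (2 * H + 1) * ε ^ (-2 : ℝ) →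
        ∀ (Δ : ℕ → ℝ), (∀ l : ℕ, Δ l = (2 : ℝ) ^ (-(l : ℝ))) →
        ∀ (M : ℕ → ℕ),
          (∀ l, l ≤ L →
            M l = ⌈ε ^ (-2 : ℝ) * Δ l ^ ((2 * H + 3) / 2) * Δ L ^ (H - 1 / 2)⌉₊) →
          ∑ l ∈ Finset.range (L + 1), Δ l ^ (-2 : ℝ) * (M l : ℝ)
            ≤ C * ε ^ (-(4 / (2 * H + 1))) := by
  have h2 : (0:ℝ) < 2 := by norm_num
  have hmul : ∀ y z : ℝ, ((2:ℝ)^y)^z = (2:ℝ)^(y*z) := fun y z => (Real.rpow_mul h2.le y z).symm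
  have hadd : ∀ y z : ℝ, (2:ℝ)^y * (2:ℝ)^z = (2:ℝ)^(y+z) := fun y z => (Real.rpow_add h2 y z).symm
  have hnat : ∀ (y : ℝ) (n : ℕ), ((2:ℝ)^y)^n = (2:ℝ)^(y*(n:ℝ)) := by
    intro y n
    rw [← Real.rpow_natCast ((2:ℝ)^y) n, hmul]
  have h4 : (2:ℝ)^(2:ℝ) = 4 := by
    rw [show (2:ℝ) = ((2:ℕ):ℝ) from by norm_num, Real.rpow_natCast]
    norm_num
  set a : ℝ := (1 - 2*H)/2 with ha
  have ha0 : 0 < a := by rw [ha]; linarith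
  set r : ℝ := (2:ℝ)^a with hrdef
  have hr1 : 1 < r := (Real.one_lt_rpow_iff_of_pos h2).mpr (Or.inl ⟨one_lt_two, ha0⟩)
  have hr0 : 0 < r - 1 := by linarith
  refine ⟨(2:ℝ)^(1-2*H) * (r/(r-1)) + 16/3, ?_⟩
  intro ε hε hε1 L hL hPow Δ hΔ M hM
  have hb : (0:ℝ) < 2*H+1 := by linarith
  -- termwise bound
  have hterm : ∀ l ∈ Finset.range (L+1),
      Δ l ^ (-2:ℝ) * (M l : ℝ) ≤
        ε^(-2:ℝ) * (2:ℝ)^((L:ℝ)*a) * r^l + (4:ℝ)^l := by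
    intro l hl
    rw [Finset.mem_range, Nat.lt_succ_iff] at hl
    have hΔl : Δ l = (2:ℝ)^(-(l:ℝ)) := hΔ l
    have hΔL : Δ L = (2:ℝ)^(-(L:ℝ)) := hΔ L
    set v := ε ^ (-2:ℝ) * Δ l ^ ((2*H+3)/2) * Δ L ^ (H - 1/2) with hv
    have hv0 : 0 ≤ v := by rw [hv, hΔl, hΔL]; positivity
    have hceil : (M l : ℝ) ≤ v + 1 := by
      rw [hM l hl]; exact (Nat.ceil_lt_add_one hv0).le
    have hpos : 0 < Δ l ^ (-2:ℝ) := by rw [hΔl]; positivity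
    have step1 : Δ l ^ (-2:ℝ) * (M l : ℝ) ≤ Δ l ^ (-2:ℝ) * (v + 1) :=
      mul_le_mul_of_nonneg_left hceil hpos.le
    refine step1.trans_eq ?_
    rw [hv, hΔl, hΔL, hrdef, hmul, hmul, hmul, hnat, ← h4, hnat, mul_add, mul_one]
    rw [show (2:ℝ)^((-(l:ℝ))*(-2:ℝ)) * (ε^(-2:ℝ) * (2:ℝ)^((-(l:ℝ))*((2*H+3)/2)) * (2:ℝ)^((-(L:ℝ))*(H-1/2)))
        = ε^(-2:ℝ) * ((2:ℝ)^((-(l:ℝ))*(-2:ℝ)) * (2:ℝ)^((-(l:ℝ))*((2*H+3)/2)) * (2:ℝ)^((-(L:ℝ))*(H-1/2))) from by ring,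
      hadd, hadd, mul_assoc (ε^(-2:ℝ)), hadd]
    rw [show -(l:ℝ) * -2 + -(l:ℝ) * ((2 * H + 3) / 2) + -(L:ℝ) * (H - 1 / 2)
          = (L:ℝ) * a + a * (l:ℝ) from by rw [ha]; ring,
        show -(l:ℝ) * -2 = 2 * (l:ℝ) from by ring]
  have hsum := Finset.sum_le_sum hterm
  rw [Finset.sum_add_distrib, ← Finset.mul_sum] at hsum
  -- geometric sums
  have hgeom : ∀ x : ℝ, 1 < x → ∑ l ∈ Finset.range (L+1), x^l ≤ x/(x-1) * x^L := by
    intro x hx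
    have hx0 : 0 < x - 1 := by linarith
    rw [geom_sum_eq (ne_of_gt hx), div_le_iff₀ hx0, pow_succ]
    have hq : x/(x-1) * x^L * (x-1) = x^L * x := by field_simp
    rw [hq]
    linarith
  have hg1 := hgeom r hr1
  have hg2 := hgeom 4 (by norm_num)
  -- consequences of hPow
  have key : ∀ t : ℝ, 0 ≤ t →
      (2:ℝ)^((L:ℝ)*(2*H+1)*t) ≤ (2:ℝ)^((2*H+1)*t) * ε^((-2)*t) := by
    intro t ht
    have h := Real.rpow_le_rpow (le_of_lt (Real.rpow_pos_of_pos h2 _)) hPow ht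
    rwa [hmul, Real.mul_rpow (le_of_lt (Real.rpow_pos_of_pos h2 _))
        (le_of_lt (Real.rpow_pos_of_pos hε _)), hmul, ← Real.rpow_mul hε.le] at h
  have B1 := key ((1-2*H)/(2*H+1)) (div_nonneg (by linarith) hb.le)
  rw [show (L:ℝ)*(2*H+1)*((1-2*H)/(2*H+1)) = (L:ℝ)*(1-2*H) from by field_simp,
      show (2*H+1)*((1-2*H)/(2*H+1)) = 1-2*H from by field_simp] at B1
  have B2 := key (2/(2*H+1)) (by positivity)
  rw [show (L:ℝ)*(2*H+1)*(2/(2*H+1)) = (2:ℝ)*(L:ℝ) from by field_simp,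
      show (2*H+1)*(2/(2*H+1)) = (2:ℝ) from by field_simp,
      show (-2:ℝ)*(2/(2*H+1)) = -(4/(2*H+1)) from by ring, h4] at B2
  set X : ℝ := ε ^ (-(4/(2*H+1))) with hXdef
  have hX0 : 0 < X := Real.rpow_pos_of_pos hε _
  -- combine
  have hA : ε^(-2:ℝ) * (2:ℝ)^((L:ℝ)*(1-2*H)) ≤ (2:ℝ)^(1-2*H) * X := by
    have h := mul_le_mul_of_nonneg_left B1 (le_of_lt (Real.rpow_pos_of_pos hε (-2)))
    calc ε^(-2:ℝ) * (2:ℝ)^((L:ℝ)*(1-2*H))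
        ≤ ε^(-2:ℝ) * ((2:ℝ)^(1-2*H) * ε^((-2:ℝ)*((1-2*H)/(2*H+1)))) := h
      _ = (2:ℝ)^(1-2*H) * (ε^(-2:ℝ) * ε^((-2:ℝ)*((1-2*H)/(2*H+1)))) := by ring
      _ = (2:ℝ)^(1-2*H) * X := by
          rw [← Real.rpow_add hε, hXdef]
          congr 1
          field_simp
          ring
  have hr2L : r^L = (2:ℝ)^(a*(L:ℝ)) := by rw [hrdef, hnat]
  have h4L : (4:ℝ)^L = (2:ℝ)^((2:ℝ)*(L:ℝ)) := by rw [← h4, hnat]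
  have hsum2 : ε^(-2:ℝ) * (2:ℝ)^((L:ℝ)*a) * ∑ l ∈ Finset.range (L+1), r^l
        + ∑ l ∈ Finset.range (L+1), (4:ℝ)^l
      ≤ r/(r-1) * ((2:ℝ)^(1-2*H) * X) + 4/3 * (4 * X) := by
    have c1 : ε^(-2:ℝ) * (2:ℝ)^((L:ℝ)*a) * ∑ l ∈ Finset.range (L+1), r^l
        ≤ ε^(-2:ℝ) * (2:ℝ)^((L:ℝ)*a) * (r/(r-1) * r^L) := by
      apply mul_le_mul_of_nonneg_left hg1
      positivity
    have c1' : ε^(-2:ℝ) * (2:ℝ)^((L:ℝ)*a) * (r/(r-1) * r^L)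
        = r/(r-1) * (ε^(-2:ℝ) * (2:ℝ)^((L:ℝ)*(1-2*H))) := by
      rw [hr2L, show ε^(-2:ℝ) * (2:ℝ)^((L:ℝ)*a) * (r/(r-1) * (2:ℝ)^(a*(L:ℝ)))
          = r/(r-1) * (ε^(-2:ℝ) * ((2:ℝ)^((L:ℝ)*a) * (2:ℝ)^(a*(L:ℝ)))) from by ring, hadd]
      congr 3
      rw [ha]; ring
    have c2 : ∑ l ∈ Finset.range (L+1), (4:ℝ)^l ≤ 4/3 * (4 * X) := by
      refine hg2.trans ?_
      rw [show (4:ℝ)/(4-1) = 4/3 from by norm_num, h4L]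
      have := mul_le_mul_of_nonneg_left B2 (show (0:ℝ) ≤ 4/3 by norm_num)
      linarith
    have c3 : r/(r-1) * (ε^(-2:ℝ) * (2:ℝ)^((L:ℝ)*(1-2*H))) ≤ r/(r-1) * ((2:ℝ)^(1-2*H) * X) := by
      apply mul_le_mul_of_nonneg_left hA
      positivity
    linarith [c1.trans (c1'.le.trans c3)]
  refine hsum.trans (hsum2.trans ?_)
  have : r/(r-1) * ((2:ℝ)^(1-2*H) * X) + 4/3 * (4 * X)
      = ((2:ℝ)^(1-2*H) * (r/(r-1)) + 16/3) * X := by ring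
  rw [this]
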